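/- arXiv:1109.0348 — 6 statements merged into one kernel-verified Lean document; each statement's English description precedes it below -/
import Mathlib

section
/- Let T ∈ T(C^n, m) be an upper triangular tensor (t_{i_1...i_m} = 0 whenever min{i_2,...,i_m} < i_1) with all diagonal entries t_{i...i} ≠ 0. Then the system T x^{m-1} = 0 has no nonzero solution x ∈ C^n. -/
/-- An upper triangular tensor (t i f = 0 whenever some rest index f j < i) of order
m = k + 1 with nonzero diagonal entries admits no nonzero solution of T x^{m-1} = 0. -/
theorem stmt4 (n k : ℕ) (hk : 1 ≤ k)
    (t : Fin n → (Fin k → Fin n) → ℂ)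
    (htri : ∀ i f, (∃ j, f j < i) → t i f = 0)
    (hdiag : ∀ i, t i (fun _ => i) ≠ 0) :
    ¬ ∃ x : Fin n → ℂ, x ≠ 0 ∧
        ∀ i, ∑ f : Fin k → Fin n, t i f * ∏ j, x (f j) = 0 := by
  rintro ⟨x, hx, heq⟩
  -- the set of indices where x is nonzero is nonempty
  have hne : (Finset.univ.filter (fun i => x i ≠ 0)).Nonempty := by
    obtain ⟨i, hi⟩ := Function.ne_iff.mp hx
    exact ⟨i, by simpa using hi⟩
  set s := Finset.univ.filter (fun i => x i ≠ 0) with hs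
  let i := s.max' hne
  have hxi : x i ≠ 0 := by
    have := s.max'_mem hne
    simpa [hs] using this
  have hmax : ∀ j, i < j → x j = 0 := by
    intro j hj
    by_contra hxj
    have hjs : j ∈ s := by simp [hs, hxj]
    exact absurd (s.le_max' j hjs) (not_le.mpr hj)
  have h := heq i
  rw [Finset.sum_eq_single (fun _ => i)] at h
  · have hpow : (∏ _j : Fin k, x i) = x i ^ k := by
      simp [Finset.prod_const]
    rw [hpow] at h
    rcases mul_eq_zero.mp h with h1 | h2
    · exact hdiag i h1
    · exact hxi (pow_eq_zero_iff (by omega) |>.mp h2)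
  · intro f _ hf
    have : ∃ j, f j ≠ i := by
      by_contra hc
      push_neg at hc
      exact hf (funext hc)
    obtain ⟨j, hj⟩ := this
    rcases lt_or_gt_of_ne hj with hlt | hgt
    · rw [htri i f ⟨j, hlt⟩, zero_mul]
    · have : x (f j) = 0 := hmax _ hgt
      rw [Finset.prod_eq_zero (Finset.mem_univ j) this, mul_zero]
  · intro hmem
    exact absurd (Finset.mem_univ _) hmem
end

section
/- Let T ∈ T(C^n, m) be an upper triangular tensor. Then λ ∈ C is an eigenvalue of T (i.e., (λE − T)x^{m-1} = 0 has a nonzero solution x ∈ C^n) if and only if λ = t_{i...i} for some i ∈ {1,...,n}. -/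
open Finset Polynomial

private lemma prod_update_split {n k : ℕ} (x : Fin n → ℂ) (r : Fin n) (z : ℂ)
    (f : Fin k → Fin n) :
    (∏ j, Function.update x r z (f j)) =
      z ^ (Finset.univ.filter (fun j => f j = r)).card *
        ∏ j ∈ Finset.univ.filter (fun j => f j ≠ r), x (f j) := by
  rw [← Finset.prod_filter_mul_prod_filter_not Finset.univ (fun j => f j = r)]
  congr 1
  rw [Finset.prod_congr rfl (fun j hj => ?_), Finset.prod_const]
  simp only [Finset.mem_filter] at hj
  rw [hj.2, Function.update_self]
  · exact Finset.prod_congr rfl (fun j hj => by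
      simp only [Finset.mem_filter] at hj
      rw [Function.update_of_ne hj.2])

private lemma exists_root_row {n k : ℕ} (hk : 1 ≤ k)
    (t : Fin n → (Fin k → Fin n) → ℂ) (lam : ℂ) (x : Fin n → ℂ) (r : Fin n)
    (hne : lam ≠ t r (fun _ => r)) :
    ∃ z : ℂ, lam * (Function.update x r z r) ^ k -
      ∑ f : Fin k → Fin n, t r f * ∏ j, Function.update x r z (f j) = 0 := by
  set e : (Fin k → Fin n) → ℕ := fun f => (Finset.univ.filter (fun j => f j = r)).card with he
  set c : (Fin k → Fin n) → ℂ :=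
    fun f => ∏ j ∈ Finset.univ.filter (fun j => f j ≠ r), x (f j) with hc
  set p : Polynomial ℂ :=
    C lam * X ^ k - ∑ f : Fin k → Fin n, C (t r f * c f) * X ^ (e f) with hp
  have heval : ∀ z, p.eval z =
      lam * (Function.update x r z r) ^ k -
        ∑ f : Fin k → Fin n, t r f * ∏ j, Function.update x r z (f j) := by
    intro z
    rw [hp]
    simp only [eval_sub, eval_mul, eval_C, eval_pow, eval_X, eval_finset_sum,
      Function.update_self]
    congr 1
    refine Finset.sum_congr rfl fun f _ => ?_
    rw [prod_update_split x r z f]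
    show t r f * c f * z ^ e f = t r f * (z ^ e f * c f)
    ring
  have hconstE : e (fun _ => r) = k := by
    simp [he]
  have hconstC : c (fun _ => r) = 1 := by
    simp [hc]
  have hsplit : p = C (lam - t r (fun _ => r)) * X ^ k -
      ∑ f ∈ Finset.univ.erase (fun _ => r), C (t r f * c f) * X ^ (e f) := by
    rw [hp, ← Finset.add_sum_erase _ _ (Finset.mem_univ (fun _ => r)), hconstE, hconstC,
      mul_one, map_sub, sub_mul, sub_add_eq_sub_sub]
  have hlead : lam - t r (fun _ => r) ≠ 0 := sub_ne_zero.mpr hne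
  have hq : (∑ f ∈ Finset.univ.erase (fun (_ : Fin k) => r), C (t r f * c f) * X ^ (e f)).degree
      < (k : WithBot ℕ) := by
    refine lt_of_le_of_lt (Polynomial.degree_sum_le _ _) ?_
    rw [Finset.sup_lt_iff (by exact_mod_cast WithBot.bot_lt_coe k)]
    intro f hf
    have hfne : f ≠ fun _ => r := (Finset.mem_erase.mp hf).1
    have : ∃ j, f j ≠ r := by
      by_contra hcon; push_neg at hcon
      exact hfne (funext hcon)
    obtain ⟨j, hj⟩ := this
    have hef : e f < k := by
      have : Finset.univ.filter (fun j => f j = r) ⊂ Finset.univ := by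
        refine Finset.ssubset_iff_of_subset (Finset.subset_univ _) |>.mpr ?_
        exact ⟨j, Finset.mem_univ j, by simp [hj]⟩
      have := Finset.card_lt_card this
      simpa [he] using this
    calc (C (t r f * c f) * X ^ (e f)).degree ≤ (e f : WithBot ℕ) :=
          Polynomial.degree_C_mul_X_pow_le _ _
      _ < (k : WithBot ℕ) := by exact_mod_cast hef
  have hdeg : p.degree = (k : WithBot ℕ) := by
    rw [hsplit, Polynomial.degree_sub_eq_left_of_degree_lt, Polynomial.degree_C_mul_X_pow k hlead]
    rw [Polynomial.degree_C_mul_X_pow k hlead]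
    exact hq
  have hroot : ∃ z, p.eval z = 0 := by
    have h0 : 0 < p.degree := by
      rw [hdeg]
      exact_mod_cast hk
    obtain ⟨z, hz⟩ := Complex.exists_root h0
    exact ⟨z, hz⟩
  obtain ⟨z, hz⟩ := hroot
  exact ⟨z, by rw [← heval z]; exact hz⟩

private lemma eqn_update {n k : ℕ}
    (t : Fin n → (Fin k → Fin n) → ℂ)
    (htri : ∀ i f, (∃ j, f j < i) → t i f = 0)
    (lam : ℂ) (x : Fin n → ℂ) (r s : Fin n) (z : ℂ) (hrs : r < s) :
    lam * (Function.update x r z s) ^ k -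
        ∑ f : Fin k → Fin n, t s f * ∏ j, Function.update x r z (f j) =
      lam * (x s) ^ k - ∑ f : Fin k → Fin n, t s f * ∏ j, x (f j) := by
  rw [Function.update_of_ne (ne_of_gt hrs)]
  congr 1
  refine Finset.sum_congr rfl fun f _ => ?_
  by_cases h : ∃ j, f j < s
  · rw [htri s f h, zero_mul, zero_mul]
  · push_neg at h
    congr 1
    refine Finset.prod_congr rfl fun j _ => ?_
    exact Function.update_of_ne ((lt_of_lt_of_le hrs (h j)).ne') z x

private lemma exists_eigvec {n k : ℕ} (hk : 1 ≤ k)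
    (t : Fin n → (Fin k → Fin n) → ℂ)
    (htri : ∀ i f, (∃ j, f j < i) → t i f = 0)
    (lam : ℂ) (i : Fin n) (hi : lam = t i (fun _ => i))
    (hmin : ∀ r : Fin n, r < i → lam ≠ t r (fun _ => r)) :
    ∃ x : Fin n → ℂ, x ≠ 0 ∧
      ∀ s, lam * (x s) ^ k - ∑ f : Fin k → Fin n, t s f * ∏ j, x (f j) = 0 := by
  have hk0 : k ≠ 0 := Nat.one_le_iff_ne_zero.mp hk
  set P : ℕ → Prop := fun r => ∃ x : Fin n → ℂ, x i = 1 ∧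
    ∀ s : Fin n, r ≤ s.val →
      lam * (x s) ^ k - ∑ f : Fin k → Fin n, t s f * ∏ j, x (f j) = 0 with hP
  have base : P i.val := by
    refine ⟨fun j => if j = i then 1 else 0, by simp, ?_⟩
    intro s hs
    rcases eq_or_lt_of_le hs with heq | hlt
    · have hsi : s = i := Fin.ext heq.symm
      subst hsi
      have hsum : (∑ f : Fin k → Fin n, t s f *
          ∏ j, (fun j => if j = s then (1:ℂ) else 0) (f j)) = t s (fun _ => s) := by
        rw [Finset.sum_eq_single (fun _ => s)]
        · simp
        · intro f _ hf
          have : ∃ j, f j ≠ s := by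
            by_contra hcon; push_neg at hcon
            exact hf (funext hcon)
          obtain ⟨j, hj⟩ := this
          rw [Finset.prod_eq_zero (Finset.mem_univ j) (by simp [hj]), mul_zero]
        · intro h; exact absurd (Finset.mem_univ _) h
      rw [hsum, ← hi]
      simp
    · have hsi : s ≠ i := fun h => by simp [h] at hlt
      simp only [if_neg hsi]
      rw [zero_pow hk0, mul_zero, zero_sub, neg_eq_zero]
      refine Finset.sum_eq_zero fun f _ => ?_
      by_cases h : ∃ j, f j < s
      · rw [htri s f h, zero_mul]
      · push_neg at h
        have j0 : Fin k := ⟨0, hk⟩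
        have hfj : f j0 ≠ i := by
          have h2 : i < f j0 := lt_of_lt_of_le (show i < s from hlt) (h j0)
          exact h2.ne'
        rw [Finset.prod_eq_zero (Finset.mem_univ j0) (by simp [hfj]), mul_zero]
  have step : ∀ r : ℕ, r < i.val → P (r + 1) → P r := by
    rintro r hr ⟨x, hxi, hxeq⟩
    have hrn : r < n := lt_trans hr i.isLt
    set rf : Fin n := ⟨r, hrn⟩ with hrf
    have hrfi : rf < i := hr
    obtain ⟨z, hz⟩ := exists_root_row hk t lam x rf (hmin rf hrfi)
    refine ⟨Function.update x rf z, ?_, ?_⟩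
    · rw [Function.update_of_ne hrfi.ne']; exact hxi
    · intro s hs
      rcases eq_or_lt_of_le hs with heq | hlt
      · have hsr : s = rf := Fin.ext heq.symm
        subst hsr
        exact hz
      · rw [eqn_update t htri lam x rf s z (show rf < s from hlt)]
        exact hxeq s hlt
  have all : ∀ d : ℕ, P (i.val - d) := by
    intro d
    induction d with
    | zero => simpa using base
    | succ d ih =>
      by_cases h : d < i.val
      · have h1 : i.val - d = (i.val - (d + 1)) + 1 := by omega
        exact step _ (by omega) (h1 ▸ ih)
      · have h1 : i.val - (d + 1) = i.val - d := by omega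
        rw [h1]; exact ih
  have hP0 : P 0 := by
    have := all i.val
    simpa using this
  obtain ⟨x, hxi, hx⟩ := hP0
  refine ⟨x, ?_, fun s => hx s (Nat.zero_le _)⟩
  intro h0
  rw [h0] at hxi
  simp at hxi

/-- For an upper triangular tensor T of order m = k + 1, λ is an eigenvalue
(i.e. (λE - T) x^{m-1} = 0 has a nonzero solution) iff λ is a diagonal entry of T. -/
theorem stmt5 (n k : ℕ) (hk : 1 ≤ k)
    (t : Fin n → (Fin k → Fin n) → ℂ)
    (htri : ∀ i f, (∃ j, f j < i) → t i f = 0)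
    (lam : ℂ) :
    (∃ x : Fin n → ℂ, x ≠ 0 ∧
        ∀ i, lam * (x i) ^ k - ∑ f : Fin k → Fin n, t i f * ∏ j, x (f j) = 0) ↔
    (∃ i : Fin n, lam = t i (fun _ => i)) := by
  constructor
  · rintro ⟨x, hx0, hx⟩
    have hS : (Finset.univ.filter (fun i => x i ≠ 0)).Nonempty := by
      by_contra h
      rw [Finset.not_nonempty_iff_eq_empty, Finset.filter_eq_empty_iff] at h
      apply hx0
      funext j
      have := h (Finset.mem_univ j)
      simpa using this
    set i := (Finset.univ.filter (fun i => x i ≠ 0)).max' hS with hidef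
    have hxi : x i ≠ 0 := (Finset.mem_filter.mp (Finset.max'_mem _ hS)).2
    have hmax : ∀ j, i < j → x j = 0 := by
      intro j hj
      by_contra hxj
      exact absurd (Finset.le_max' _ j (Finset.mem_filter.mpr ⟨Finset.mem_univ _, hxj⟩))
        (not_le.mpr hj)
    refine ⟨i, ?_⟩
    have heq := hx i
    have hsum : (∑ f : Fin k → Fin n, t i f * ∏ j, x (f j)) =
        t i (fun _ => i) * (x i) ^ k := by
      rw [Finset.sum_eq_single (fun _ => i)]
      · rw [Finset.prod_const]
        simp
      · intro f _ hf
        by_cases h : ∃ j, f j < i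
        · rw [htri i f h, zero_mul]
        · push_neg at h
          have : ∃ j, i < f j := by
            by_contra hc; push_neg at hc
            exact hf (funext fun j => le_antisymm (hc j) (h j))
          obtain ⟨j, hj⟩ := this
          rw [Finset.prod_eq_zero (Finset.mem_univ j) (hmax _ hj), mul_zero]
      · intro h; exact absurd (Finset.mem_univ _) h
    rw [hsum] at heq
    have hfac : (lam - t i (fun _ => i)) * (x i) ^ k = 0 := by linear_combination heq
    rcases mul_eq_zero.mp hfac with h | h
    · exact sub_eq_zero.mp h
    · exact absurd h (pow_ne_zero k hxi)
  · rintro ⟨i, hi⟩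
    have hS : (Finset.univ.filter (fun r : Fin n => lam = t r (fun _ => r))).Nonempty :=
      ⟨i, Finset.mem_filter.mpr ⟨Finset.mem_univ _, hi⟩⟩
    set i0 := (Finset.univ.filter (fun r : Fin n => lam = t r (fun _ => r))).min' hS with hi0
    have hi0mem : lam = t i0 (fun _ => i0) :=
      (Finset.mem_filter.mp (Finset.min'_mem _ hS)).2
    have hmin : ∀ r : Fin n, r < i0 → lam ≠ t r (fun _ => r) := by
      intro r hr hlam
      exact absurd (Finset.min'_le _ r (Finset.mem_filter.mpr ⟨Finset.mem_univ _, hlam⟩))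
        (not_le.mpr hr)
    exact exists_eigvec hk t htri lam i0 hi0mem hmin
end

section
/- The composition of two upper triangular tensors is upper triangular: if U ∈ T(C^n,p) and V ∈ T(C^n,q) are upper triangular (p,q ≥ 2), then the tensor W = U ∘ V of order (p-1)(q-1)+1 defined by w_{i j_{(i_2,2)}...j_{(i_p,q)}} = Σ_{i_2,...,i_p} u_{i i_2...i_p} v_{i_2 j_{(i_2,2)}...j_{(i_2,q)}} ⋯ v_{i_p j_{(i_p,2)}...j_{(i_p,q)}} is upper triangular. -/
/-- The composition of two upper triangular tensors is upper triangular. -/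
theorem stmt6 (n a b : ℕ) (ha : 1 ≤ a) (hb : 1 ≤ b)
    (u : Fin n → (Fin a → Fin n) → ℂ)
    (v : Fin n → (Fin b → Fin n) → ℂ)
    (hu : ∀ i f, (∃ j, f j < i) → u i f = 0)
    (hv : ∀ i g, (∃ j, g j < i) → v i g = 0) :
    ∀ (i : Fin n) (J : Fin a × Fin b → Fin n), (∃ p, J p < i) →
      ∑ f : Fin a → Fin n, u i f * ∏ s : Fin a, v (f s) (fun r => J (s, r)) = 0 := by
  intro i J ⟨⟨s, r⟩, hsr⟩
  apply Finset.sum_eq_zero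
  intro f _
  by_cases h : ∃ j, f j < i
  · rw [hu i f h, zero_mul]
  · push_neg at h
    have : v (f s) (fun r => J (s, r)) = 0 :=
      hv _ _ ⟨r, lt_of_lt_of_le hsr (h s)⟩
    rw [Finset.prod_eq_zero (Finset.mem_univ s) this, mul_zero]
end

section
/- Let i ≠ j, let m ≥ 2, and let k, h ≥ 1 and s ∈ {1, ..., min{h,k}(m−1)}. In the expansion of Tr(A^{(k+h)(m−1)}) = Σ_{i_1,...,i_{(k+h)(m−1)}} a_{i_1 i_2} a_{i_2 i_3} ⋯ a_{i_{(k+h)(m−1)} i_1} over an n×n matrix of commuting indeterminates, the number of cyclic index sequences producing the monomial (a_{ii})^{k(m−1)−s} (a_{ij})^s (a_{ji})^s (a_{jj})^{h(m−1)−s} equals C(k(m−1), s)·C(h(m−1)−1, s−1) + C(h(m−1), s)·C(k(m−1)−1, s−1), where C(·,·) denotes the binomial coefficient. -/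
open Finset

/-- number of `true` values of a Boolean word -/
def wtt {N : ℕ} (g : Fin N → Bool) : ℕ :=
  (univ.filter fun w => g w = true).card

/-- number of linear descents true→false -/
def lrises {L : ℕ} (g : Fin (L + 1) → Bool) : ℕ :=
  (univ.filter fun t : Fin L => g t.castSucc = true ∧ g t.succ = false).card

/-- number of cyclic descents true→false -/
def crises {N : ℕ} (g : Fin N → Bool) : ℕ :=
  (univ.filter fun w => g w = true ∧ g (finRotate N w) = false).card

/-- closed-form count of linear words with given first letter, `a` trues, `b` falses,
`s` descents -/
def Lfun : Bool → ℕ → ℕ → ℕ → ℕ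
  | true, a, b, s =>
      if a = 0 then 0 else if b = 0 then (if s = 0 then 1 else 0)
      else if s = 0 then 0 else a.choose s * (b - 1).choose (s - 1)
  | false, a, b, s =>
      if b = 0 then 0 else if a = 0 then (if s = 0 then 1 else 0)
      else a.choose s * (b - 1).choose s

lemma split_bool {α : Type*} [Fintype α] (q : α → Prop) [DecidablePred q] (f : α → Bool) :
    (univ.filter fun w => q w ∧ f w = true).card
      + (univ.filter fun w => q w ∧ f w = false).card
      = (univ.filter q).card := by
  have h := Finset.card_filter_add_card_filter_not
    (s := univ.filter q) (p := fun w => f w = true)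
  rw [Finset.filter_filter, Finset.filter_filter] at h
  simpa [Bool.not_eq_true] using h

lemma card_filter_perm {α : Type*} [Fintype α] [DecidableEq α] (e : Equiv.Perm α)
    (p : α → Prop) [DecidablePred p] :
    (univ.filter fun w => p (e w)).card = (univ.filter p).card := by
  apply Finset.card_nbij' e e.symm <;> intro x hx <;> simp_all


lemma wt_cons {L : ℕ} (x : Bool) (w : Fin L → Bool) :
    wtt (Fin.cons x w) = (if x = true then 1 else 0) + wtt w := by
  unfold wtt
  rw [Finset.card_filter, Fin.sum_univ_succ, Finset.card_filter]
  simp [Fin.cons_succ, Fin.cons_zero]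


lemma lrises_cons {L : ℕ} (x : Bool) (w : Fin (L + 1) → Bool) :
    lrises (Fin.cons x w) = (if x = true ∧ w 0 = false then 1 else 0) + lrises w := by
  unfold lrises
  rw [Finset.card_filter, Fin.sum_univ_succ, Finset.card_filter]
  congr 1

lemma rise_eq_fall {N : ℕ} (g : Fin N → Bool) :
    (univ.filter fun w => g w = true ∧ g (finRotate N w) = false).card =
    (univ.filter fun w => g w = false ∧ g (finRotate N w) = true).card := by
  have h1 := split_bool (fun w : Fin N => g w = true) (fun w => g (finRotate N w))
  have h2 := split_bool (fun w : Fin N => g (finRotate N w) = true) g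
  rw [card_filter_perm (finRotate N) (fun w => g w = true)] at h2
  have c1 : (univ.filter fun w : Fin N => g (finRotate N w) = true ∧ g w = true)
      = (univ.filter fun w => g w = true ∧ g (finRotate N w) = true) :=
    Finset.filter_congr (fun w _ => and_comm)
  have c2 : (univ.filter fun w : Fin N => g (finRotate N w) = true ∧ g w = false)
      = (univ.filter fun w => g w = false ∧ g (finRotate N w) = true) :=
    Finset.filter_congr (fun w _ => and_comm)
  rw [c1, c2] at h2
  omega

lemma crises_eq_lrises {L : ℕ} (g : Fin (L + 1) → Bool) (h0 : g 0 = true) :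
    crises g = lrises g := by
  unfold crises lrises
  rw [Finset.card_filter, Finset.card_filter, Fin.sum_univ_castSucc]
  have hlast : (if g (Fin.last L) = true ∧ g (finRotate (L + 1) (Fin.last L)) = false
      then 1 else 0) = 0 := by
    simp [finRotate_last, h0]
  rw [hlast, add_zero]
  apply Finset.sum_congr rfl
  intro t _
  rw [finRotate_succ_apply, Fin.coeSucc_eq_succ]


lemma wt_not {N : ℕ} (g : Fin N → Bool) : wtt (fun w => ! g w) + wtt g = N := by
  unfold wtt
  have e : (univ.filter fun w : Fin N => (! g w) = true)
      = (univ.filter fun w => ¬ (g w = true)) :=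
    Finset.filter_congr (fun w _ => by simp)
  rw [e, add_comm]
  simpa using Finset.card_filter_add_card_filter_not (s := (univ : Finset (Fin N))) (fun w => g w = true)

lemma crises_not {N : ℕ} (g : Fin N → Bool) : crises (fun w => ! g w) = crises g := by
  unfold crises
  have e : (univ.filter fun w : Fin N => (! g w) = true ∧ (! g (finRotate N w)) = false)
      = (univ.filter fun w => g w = false ∧ g (finRotate N w) = true) :=
    Finset.filter_congr (fun w _ => by simp)
  rw [e, ← rise_eq_fall]


lemma Lfun_true_rec0 (a b : ℕ) (hab : 1 ≤ a + b) :
    Lfun true (a + 1) b 0 = Lfun true a b 0 := by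
  rcases a with _ | a <;> rcases b with _ | b <;> simp [Lfun] <;> omega

lemma Lfun_true_recS (a b s : ℕ) :
    Lfun true (a + 1) b (s + 1) = Lfun true a b (s + 1) + Lfun false a b s := by
  rcases a with _ | a <;> rcases b with _ | b <;> simp [Lfun, Nat.choose]
  · rcases s with _ | s <;> simp [Nat.choose]
  · ring

lemma Lfun_false_rec (a b s : ℕ) (hab : 1 ≤ a + b) :
    Lfun false a (b + 1) s = Lfun true a b s + Lfun false a b s := by
  rcases a with _ | a <;> rcases b with _ | b <;> simp [Lfun]
  · omega
  · rcases s with _ | s <;> simp [Nat.choose]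
  · rcases s with _ | s <;> simp [Nat.choose]
    ring


lemma LL : ∀ (L : ℕ) (first : Bool) (a b s : ℕ), a + b = L + 1 →
    (univ.filter fun g : Fin (L + 1) → Bool =>
      g 0 = first ∧ wtt g = a ∧ lrises g = s).card = Lfun first a b s := by
  intro L
  induction L with
  | zero =>
    intro first a b s hab
    have key : (univ.filter fun g : Fin 1 → Bool =>
        g 0 = first ∧ wtt g = a ∧ lrises g = s).card
        = (univ.filter fun x : Bool =>
            x = first ∧ (if x = true then 1 else 0) = a ∧ 0 = s).card := by
      have hw : ∀ g : Fin 1 → Bool, wtt g = if g 0 = true then 1 else 0 := by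
        intro g; unfold wtt; rw [Finset.card_filter, Fin.sum_univ_one]
      have hl : ∀ g : Fin 1 → Bool, lrises g = 0 := by
        intro g; unfold lrises; simp
      apply Finset.card_nbij' (fun g => g 0) (fun x => fun _ => x)
      · intro g hg
        simp only [mem_coe, mem_filter, mem_univ, true_and] at hg ⊢
        obtain ⟨h0, h1, h2⟩ := hg
        rw [hw g] at h1
        rw [hl g] at h2
        exact ⟨h0, h1, h2⟩
      · intro x hx
        simp only [mem_coe, mem_filter, mem_univ, true_and] at hx ⊢
        rw [hw, hl]
        simpa using hx
      · intro g _
        funext v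
        rw [Fin.eq_zero v]
      · intro x _
        rfl
    rw [key, Finset.card_filter, Fintype.sum_bool]
    clear key
    have hb1 : (a = 0 ∧ b = 1) ∨ (a = 1 ∧ b = 0) := by omega
    rcases hb1 with ⟨rfl, rfl⟩ | ⟨rfl, rfl⟩ <;> cases first <;> rcases s with _ | s <;>
      simp [Lfun]
  | succ L ih =>
    intro first a b s hab
    have key : (univ.filter fun g : Fin (L + 2) → Bool =>
        g 0 = first ∧ wtt g = a ∧ lrises g = s).card =
        (univ.filter fun w : Fin (L + 1) → Bool =>
          ((if first = true then 1 else 0) + wtt w = a) ∧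
          ((if first = true ∧ w 0 = false then 1 else 0) + lrises w = s)).card := by
      apply Finset.card_nbij' (fun g => Fin.tail g) (fun w => Fin.cons first w)
      · intro g hg
        simp only [mem_coe, mem_filter, mem_univ, true_and] at hg ⊢
        obtain ⟨h0, hwt, hlr⟩ := hg
        have e1 : wtt g = (if first = true then 1 else 0) + wtt (Fin.tail g) := by
          conv_lhs => rw [← Fin.cons_self_tail g]
          rw [wt_cons, h0]
        have e2 : lrises g = (if first = true ∧ Fin.tail g 0 = false then 1 else 0)
            + lrises (Fin.tail g) := by
          conv_lhs => rw [← Fin.cons_self_tail g]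
          rw [lrises_cons, h0]
        exact ⟨by rw [← e1]; exact hwt, by rw [← e2]; exact hlr⟩
      · intro w hwmem
        simp only [mem_coe, mem_filter, mem_univ, true_and] at hwmem ⊢
        refine ⟨Fin.cons_zero _ _, ?_, ?_⟩
        · rw [wt_cons]; exact hwmem.1
        · rw [lrises_cons]; exact hwmem.2
      · intro g hg
        simp only [mem_coe, mem_filter, mem_univ, true_and] at hg
        rw [← hg.1]; exact Fin.cons_self_tail g
      · intro w _
        exact Fin.tail_cons (α := fun _ : Fin (L + 2) => Bool) first w
    rw [key]
    clear key
    cases first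
    · -- first = false
      have e : (univ.filter fun w : Fin (L + 1) → Bool =>
          ((if (false : Bool) = true then 1 else 0) + wtt w = a) ∧
          ((if (false : Bool) = true ∧ w 0 = false then 1 else 0) + lrises w = s))
          = (univ.filter fun w => wtt w = a ∧ lrises w = s) := by
        apply Finset.filter_congr; intro w _; simp
      rw [e]
      rcases b with _ | b
      · have hempty : (univ.filter fun w : Fin (L + 1) → Bool =>
            wtt w = a ∧ lrises w = s) = ∅ := by
          apply Finset.filter_eq_empty_iff.mpr
          intro w _
          rintro ⟨h1, -⟩
          have hle : wtt w ≤ L + 1 := by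
            unfold wtt
            exact le_trans (Finset.card_filter_le _ _) (le_of_eq (by simp))
          omega
        rw [hempty]
        simp [Lfun]
      · rw [← split_bool (fun w : Fin (L + 1) → Bool => wtt w = a ∧ lrises w = s)
          (fun w => w 0)]
        have e1 : (univ.filter fun w : Fin (L + 1) → Bool =>
            (wtt w = a ∧ lrises w = s) ∧ w 0 = true)
            = (univ.filter fun w => w 0 = true ∧ wtt w = a ∧ lrises w = s) :=
          Finset.filter_congr (fun w _ => by tauto)
        have e2 : (univ.filter fun w : Fin (L + 1) → Bool =>
            (wtt w = a ∧ lrises w = s) ∧ w 0 = false)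
            = (univ.filter fun w => w 0 = false ∧ wtt w = a ∧ lrises w = s) :=
          Finset.filter_congr (fun w _ => by tauto)
        rw [e1, e2, ih true a b s (by omega), ih false a b s (by omega)]
        exact (Lfun_false_rec a b s (by omega)).symm
    · -- first = true
      rcases a with _ | a
      · have hempty : (univ.filter fun w : Fin (L + 1) → Bool =>
            ((if (true : Bool) = true then 1 else 0) + wtt w = 0) ∧
            ((if (true : Bool) = true ∧ w 0 = false then 1 else 0) + lrises w = s)) = ∅ := by
          apply Finset.filter_eq_empty_iff.mpr
          intro w _
          rintro ⟨h1, -⟩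
          simp at h1
        rw [hempty]
        simp [Lfun]
      · have e : (univ.filter fun w : Fin (L + 1) → Bool =>
            ((if (true : Bool) = true then 1 else 0) + wtt w = a + 1) ∧
            ((if (true : Bool) = true ∧ w 0 = false then 1 else 0) + lrises w = s))
            = (univ.filter fun w => wtt w = a ∧
                ((if w 0 = false then 1 else 0) + lrises w = s)) := by
          apply Finset.filter_congr; intro w _
          constructor
          · rintro ⟨h1, h2⟩
            have h1' : 1 + wtt w = a + 1 := h1
            exact ⟨by omega, by simpa using h2⟩
          · rintro ⟨h1, h2⟩
            exact ⟨show 1 + wtt w = a + 1 by omega, by simpa using h2⟩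
        rw [e, ← split_bool (fun w : Fin (L + 1) → Bool => wtt w = a ∧
              ((if w 0 = false then 1 else 0) + lrises w = s)) (fun w => w 0)]
        have eT : (univ.filter fun w : Fin (L + 1) → Bool =>
            (wtt w = a ∧ ((if w 0 = false then 1 else 0) + lrises w = s)) ∧ w 0 = true)
            = (univ.filter fun w => w 0 = true ∧ wtt w = a ∧ lrises w = s) := by
          apply Finset.filter_congr; intro w _
          constructor
          · rintro ⟨⟨h1, h2⟩, h3⟩
            rw [h3] at h2
            exact ⟨h3, h1, by simpa using h2⟩
          · rintro ⟨h3, h1, h2⟩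
            refine ⟨⟨h1, ?_⟩, h3⟩
            rw [h3]; simpa using h2
        rw [eT, ih true a b s (by omega)]
        rcases s with _ | s
        · have eF : (univ.filter fun w : Fin (L + 1) → Bool =>
              (wtt w = a ∧ ((if w 0 = false then 1 else 0) + lrises w = 0)) ∧ w 0 = false)
              = ∅ := by
            apply Finset.filter_eq_empty_iff.mpr
            intro w _
            rintro ⟨⟨-, h2⟩, h3⟩
            rw [h3] at h2
            simp at h2
          rw [eF, Finset.card_empty, add_zero]
          exact (Lfun_true_rec0 a b (by omega)).symm
        · have eF : (univ.filter fun w : Fin (L + 1) → Bool =>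
              (wtt w = a ∧ ((if w 0 = false then 1 else 0) + lrises w = s + 1)) ∧ w 0 = false)
              = (univ.filter fun w => w 0 = false ∧ wtt w = a ∧ lrises w = s) := by
            apply Finset.filter_congr; intro w _
            constructor
            · rintro ⟨⟨h1, h2⟩, h3⟩
              rw [h3] at h2
              have h2' : 1 + lrises w = s + 1 := h2
              exact ⟨h3, h1, by omega⟩
            · rintro ⟨h3, h1, h2⟩
              refine ⟨⟨h1, ?_⟩, h3⟩
              rw [h3, h2]
              exact show 1 + s = s + 1 by omega
          rw [eF, ih false a b s (by omega)]
          exact (Lfun_true_recS a b s).symm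


lemma CC (L a b s : ℕ) (hab : L + 2 = a + b) (hs1 : 1 ≤ s) (hsa : s ≤ a) (hsb : s ≤ b) :
    (univ.filter fun g : Fin (L + 2) → Bool =>
      g 0 = true ∧ wtt g = a ∧ crises g = s).card
      = a.choose s * (b - 1).choose (s - 1) := by
  have hfc : (univ.filter fun g : Fin (L + 2) → Bool => g 0 = true ∧ wtt g = a ∧ crises g = s)
      = (univ.filter fun g : Fin (L + 2) → Bool => g 0 = true ∧ wtt g = a ∧ lrises g = s) := by
    apply Finset.filter_congr; intro g _
    constructor
    · rintro ⟨h0, hw, hc⟩; exact ⟨h0, hw, by rw [← crises_eq_lrises g h0]; exact hc⟩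
    · rintro ⟨h0, hw, hc⟩; exact ⟨h0, hw, by rw [crises_eq_lrises g h0]; exact hc⟩
  rw [hfc, LL (L + 1) true a b s (by omega)]
  have ha : ¬ (a = 0) := by omega
  have hb : ¬ (b = 0) := by omega
  have hs : ¬ (s = 0) := by omega
  simp [Lfun, ha, hb, hs]


lemma BoolCount (N a b s : ℕ) (hab : N = a + b) (hs1 : 1 ≤ s) (hsa : s ≤ a) (hsb : s ≤ b) :
    (univ.filter fun g : Fin N → Bool =>
      (univ.filter fun w => g w = true ∧ g (finRotate N w) = true).card = a - s ∧
      (univ.filter fun w => g w = true ∧ g (finRotate N w) = false).card = s ∧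
      (univ.filter fun w => g w = false ∧ g (finRotate N w) = true).card = s ∧
      (univ.filter fun w => g w = false ∧ g (finRotate N w) = false).card = b - s).card =
    a.choose s * (b - 1).choose (s - 1) + b.choose s * (a - 1).choose (s - 1) := by
  obtain ⟨L, rfl⟩ : ∃ L, N = L + 2 := ⟨N - 2, by omega⟩
  have hab1 : L + 2 = a + b := by omega
  have hab2 : L + 2 = b + a := by omega
  have hiff : ∀ g : Fin (L + 2) → Bool,
      ((univ.filter fun w => g w = true ∧ g (finRotate (L + 2) w) = true).card = a - s ∧
       (univ.filter fun w => g w = true ∧ g (finRotate (L + 2) w) = false).card = s ∧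
       (univ.filter fun w => g w = false ∧ g (finRotate (L + 2) w) = true).card = s ∧
       (univ.filter fun w => g w = false ∧ g (finRotate (L + 2) w) = false).card = b - s)
      ↔ (wtt g = a ∧ crises g = s) := by
    intro g
    have h1 : (univ.filter fun w : Fin (L + 2) => g w = true ∧ g (finRotate (L + 2) w) = true).card
        + (univ.filter fun w : Fin (L + 2) => g w = true ∧ g (finRotate (L + 2) w) = false).card
        = (univ.filter fun w : Fin (L + 2) => g w = true).card := split_bool _ _
    have h2 : (univ.filter fun w : Fin (L + 2) => g w = false ∧ g (finRotate (L + 2) w) = true).card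
        + (univ.filter fun w : Fin (L + 2) => g w = false ∧ g (finRotate (L + 2) w) = false).card
        = (univ.filter fun w : Fin (L + 2) => g w = false).card := split_bool _ _
    have h4 : (univ.filter fun w : Fin (L + 2) => g w = true ∧ g (finRotate (L + 2) w) = false).card
        = (univ.filter fun w : Fin (L + 2) => g w = false ∧ g (finRotate (L + 2) w) = true).card :=
      rise_eq_fall g
    have h3 : (univ.filter fun w : Fin (L + 2) => g w = true).card
        + (univ.filter fun w : Fin (L + 2) => g w = false).card = L + 2 := by
      have h5 := Finset.card_filter_add_card_filter_not
        (s := (univ : Finset (Fin (L + 2)))) (fun w => g w = true)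
      simpa [Bool.not_eq_true] using h5
    have hwt : wtt g = (univ.filter fun w : Fin (L + 2) => g w = true).card := rfl
    have hcr : crises g
        = (univ.filter fun w : Fin (L + 2) => g w = true ∧ g (finRotate (L + 2) w) = false).card :=
      rfl
    rw [hwt, hcr]
    omega
  have hfe : (univ.filter fun g : Fin (L + 2) → Bool =>
      (univ.filter fun w => g w = true ∧ g (finRotate (L + 2) w) = true).card = a - s ∧
      (univ.filter fun w => g w = true ∧ g (finRotate (L + 2) w) = false).card = s ∧
      (univ.filter fun w => g w = false ∧ g (finRotate (L + 2) w) = true).card = s ∧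
      (univ.filter fun w => g w = false ∧ g (finRotate (L + 2) w) = false).card = b - s)
      = (univ.filter fun g : Fin (L + 2) → Bool => wtt g = a ∧ crises g = s) :=
    Finset.filter_congr (fun g _ => hiff g)
  rw [hfe,
    ← split_bool (fun g : Fin (L + 2) → Bool => wtt g = a ∧ crises g = s) (fun g => g 0)]
  have eT : (univ.filter fun g : Fin (L + 2) → Bool =>
      (wtt g = a ∧ crises g = s) ∧ g 0 = true)
      = (univ.filter fun g : Fin (L + 2) → Bool => g 0 = true ∧ wtt g = a ∧ crises g = s) :=
    Finset.filter_congr (fun g _ => by tauto)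
  have ccomp : (univ.filter fun g : Fin (L + 2) → Bool =>
      (wtt g = a ∧ crises g = s) ∧ g 0 = false).card
      = (univ.filter fun g : Fin (L + 2) → Bool => g 0 = true ∧ wtt g = b ∧ crises g = s).card := by
    apply Finset.card_nbij' (fun g w => ! g w) (fun g w => ! g w)
    · intro g hg
      simp only [mem_coe, mem_filter, mem_univ, true_and] at hg ⊢
      obtain ⟨⟨hw, hc⟩, h0⟩ := hg
      refine ⟨by rw [h0]; rfl, ?_, ?_⟩
      · have h6 := wt_not g
        omega
      · rw [crises_not g]
        exact hc
    · intro g hg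
      simp only [mem_coe, mem_filter, mem_univ, true_and] at hg ⊢
      obtain ⟨h0, hw, hc⟩ := hg
      refine ⟨⟨?_, ?_⟩, by rw [h0]; rfl⟩
      · have h6 := wt_not g
        omega
      · rw [crises_not g]
        exact hc
    · intro g _
      funext w
      simp
    · intro g _
      funext w
      simp
  rw [eT, ccomp, CC L a b s hab1 hs1 hsa hsb, CC L b a s hab2 hs1 hsb hsa]


/-- Counting lemma for the trace expansion.  A cyclic index sequence
`c : Fin N → Fin n` (N = (k+h)(m-1)) contributes the monomial
`∏_s a_{c s, c (s+1)}` to Tr(A^N); the number of sequences whose monomial equals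
`(a_{ii})^{k(m-1)-s} (a_{ij})^s (a_{ji})^s (a_{jj})^{h(m-1)-s}` is
`C(k(m-1), s) C(h(m-1)-1, s-1) + C(h(m-1), s) C(k(m-1)-1, s-1)`.
Equality of monomials is expressed by counting, for each pair (p, q), the number of
positions of the factor `a_{pq}`. -/
theorem stmt7 (n m k h s : ℕ) (i j : Fin n) (hij : i ≠ j)
    (hm : 2 ≤ m) (hk : 1 ≤ k) (hh : 1 ≤ h)
    (hs1 : 1 ≤ s) (hs2 : s ≤ min h k * (m - 1)) :
    (Finset.univ.filter (fun c : Fin ((k + h) * (m - 1)) → Fin n =>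
        ∀ p q : Fin n,
          (Finset.univ.filter (fun w : Fin ((k + h) * (m - 1)) =>
              c w = p ∧ c (finRotate _ w) = q)).card =
            (if p = i ∧ q = i then k * (m - 1) - s
             else if p = i ∧ q = j then s
             else if p = j ∧ q = i then s
             else if p = j ∧ q = j then h * (m - 1) - s
             else 0))).card =
      Nat.choose (k * (m - 1)) s * Nat.choose (h * (m - 1) - 1) (s - 1) +
      Nat.choose (h * (m - 1)) s * Nat.choose (k * (m - 1) - 1) (s - 1) := by
  have hji : j ≠ i := Ne.symm hij
  have hNab : (k + h) * (m - 1) = k * (m - 1) + h * (m - 1) := add_mul k h (m - 1)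
  have hsa : s ≤ k * (m - 1) := le_trans hs2 (Nat.mul_le_mul_right _ (min_le_right h k))
  have hsb : s ≤ h * (m - 1) := le_trans hs2 (Nat.mul_le_mul_right _ (min_le_left h k))
  rw [← BoolCount ((k + h) * (m - 1)) (k * (m - 1)) (h * (m - 1)) s hNab hs1 hsa hsb]
  set N := (k + h) * (m - 1) with hN
  -- totality
  have tot : ∀ c : Fin N → Fin n,
      (∀ p q : Fin n,
        (Finset.univ.filter (fun w : Fin N => c w = p ∧ c (finRotate N w) = q)).card =
          (if p = i ∧ q = i then k * (m - 1) - s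
           else if p = i ∧ q = j then s
           else if p = j ∧ q = i then s
           else if p = j ∧ q = j then h * (m - 1) - s
           else 0)) → ∀ w, c w = i ∨ c w = j := by
    intro c hc w
    by_contra hw
    push_neg at hw
    obtain ⟨hwi, hwj⟩ := hw
    have hpos : 0 < (univ.filter fun w' : Fin N =>
        c w' = c w ∧ c (finRotate N w') = c (finRotate N w)).card :=
      Finset.card_pos.mpr ⟨w, by simp⟩
    rw [hc (c w) (c (finRotate N w))] at hpos
    simp [hwi, hwj] at hpos
  apply Finset.card_nbij' (fun c w => decide (c w = i)) (fun g w => if g w then i else j)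
  · intro c hc
    simp only [mem_coe, mem_filter, mem_univ, true_and] at hc ⊢
    have htot := tot c hc
    refine ⟨?_, ?_, ?_, ?_⟩
    · have e : (univ.filter fun w : Fin N =>
          decide (c w = i) = true ∧ decide (c (finRotate N w) = i) = true)
          = (univ.filter fun w : Fin N => c w = i ∧ c (finRotate N w) = i) :=
        Finset.filter_congr (fun w _ => by simp)
      rw [e, hc i i]
      simp
    · have e : (univ.filter fun w : Fin N =>
          decide (c w = i) = true ∧ decide (c (finRotate N w) = i) = false)
          = (univ.filter fun w : Fin N => c w = i ∧ c (finRotate N w) = j) := by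
        apply Finset.filter_congr
        intro w _
        simp only [decide_eq_true_eq, decide_eq_false_iff_not]
        constructor
        · rintro ⟨h1, h2⟩
          exact ⟨h1, (htot (finRotate N w)).resolve_left h2⟩
        · rintro ⟨h1, h2⟩
          exact ⟨h1, by rw [h2]; exact hji⟩
      rw [e, hc i j]
      simp [hij, hji]
    · have e : (univ.filter fun w : Fin N =>
          decide (c w = i) = false ∧ decide (c (finRotate N w) = i) = true)
          = (univ.filter fun w : Fin N => c w = j ∧ c (finRotate N w) = i) := by
        apply Finset.filter_congr
        intro w _
        simp only [decide_eq_true_eq, decide_eq_false_iff_not]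
        constructor
        · rintro ⟨h1, h2⟩
          exact ⟨(htot w).resolve_left h1, h2⟩
        · rintro ⟨h1, h2⟩
          exact ⟨by rw [h1]; exact hji, h2⟩
      rw [e, hc j i]
      simp [hij, hji]
    · have e : (univ.filter fun w : Fin N =>
          decide (c w = i) = false ∧ decide (c (finRotate N w) = i) = false)
          = (univ.filter fun w : Fin N => c w = j ∧ c (finRotate N w) = j) := by
        apply Finset.filter_congr
        intro w _
        simp only [decide_eq_true_eq, decide_eq_false_iff_not]
        constructor
        · rintro ⟨h1, h2⟩
          exact ⟨(htot w).resolve_left h1, (htot (finRotate N w)).resolve_left h2⟩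
        · rintro ⟨h1, h2⟩
          exact ⟨by rw [h1]; exact hji, by rw [h2]; exact hji⟩
      rw [e, hc j j]
      simp [hij, hji]
  · intro g hg
    simp only [mem_coe, mem_filter, mem_univ, true_and] at hg ⊢
    obtain ⟨hA, hB, hC, hD⟩ := hg
    have hci : ∀ w : Fin N, ((if g w then i else j) = i) ↔ g w = true := by
      intro w
      cases hgw : g w <;> simp [hgw, hji]
    have hcj : ∀ w : Fin N, ((if g w then i else j) = j) ↔ g w = false := by
      intro w
      cases hgw : g w <;> simp [hgw, hij]
    have hco : ∀ p : Fin n, p ≠ i → p ≠ j → ∀ w : Fin N, (if g w then i else j) ≠ p := by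
      intro p hpi hpj w
      cases hgw : g w <;> simp [hgw]
      · exact Ne.symm hpj
      · exact Ne.symm hpi
    intro p q
    by_cases hp : p = i
    · rw [hp]
      by_cases hq : q = i
      · rw [hq]
        have e : (univ.filter fun w : Fin N =>
            (if g w then i else j) = i ∧ (if g (finRotate N w) then i else j) = i)
            = (univ.filter fun w : Fin N => g w = true ∧ g (finRotate N w) = true) :=
          Finset.filter_congr (fun w _ => by rw [hci, hci])
        rw [e, hA]
        simp
      · by_cases hq' : q = j
        · rw [hq']
          have e : (univ.filter fun w : Fin N =>
              (if g w then i else j) = i ∧ (if g (finRotate N w) then i else j) = j)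
              = (univ.filter fun w : Fin N => g w = true ∧ g (finRotate N w) = false) :=
            Finset.filter_congr (fun w _ => by rw [hci, hcj])
          rw [e, hB]
          simp [hij, hji]
        · have e : (univ.filter fun w : Fin N =>
              (if g w then i else j) = i ∧ (if g (finRotate N w) then i else j) = q) = ∅ := by
            apply Finset.filter_eq_empty_iff.mpr
            intro w _
            rintro ⟨-, h2⟩
            exact hco q hq hq' _ h2
          rw [e]
          simp [hq, hq']
    · by_cases hp' : p = j
      · rw [hp']
        by_cases hq : q = i
        · rw [hq]
          have e : (univ.filter fun w : Fin N =>
              (if g w then i else j) = j ∧ (if g (finRotate N w) then i else j) = i)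
              = (univ.filter fun w : Fin N => g w = false ∧ g (finRotate N w) = true) :=
            Finset.filter_congr (fun w _ => by rw [hci, hcj])
          rw [e, hC]
          simp [hij, hji]
        · by_cases hq' : q = j
          · rw [hq']
            have e : (univ.filter fun w : Fin N =>
                (if g w then i else j) = j ∧ (if g (finRotate N w) then i else j) = j)
                = (univ.filter fun w : Fin N => g w = false ∧ g (finRotate N w) = false) :=
              Finset.filter_congr (fun w _ => by rw [hcj, hcj])
            rw [e, hD]
            simp [hij, hji]
          · have e : (univ.filter fun w : Fin N =>
                (if g w then i else j) = j ∧ (if g (finRotate N w) then i else j) = q) = ∅ := by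
              apply Finset.filter_eq_empty_iff.mpr
              intro w _
              rintro ⟨-, h2⟩
              exact hco q hq hq' _ h2
            rw [e]
            simp [hij, hji, hq, hq']
      · have e : (univ.filter fun w : Fin N =>
            (if g w then i else j) = p ∧ (if g (finRotate N w) then i else j) = q) = ∅ := by
          apply Finset.filter_eq_empty_iff.mpr
          intro w _
          rintro ⟨h1, -⟩
          exact hco p hp hp' _ h1
        rw [e]
        simp [hp, hp']
  · intro c hc
    simp only [mem_coe, mem_filter, mem_univ, true_and] at hc
    funext w
    rcases tot c hc w with hcw | hcw <;> simp [hcw, hji]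
  · intro g _
    funext w
    cases hgw : g w <;> simp [hgw, hji]
end

section
/- Let T ∈ T(C^n, m) with n ≥ 2 and suppose there is k with 1 ≤ k ≤ n−1 such that t_{i i_2 ... i_m} = 0 for every i ∈ {k+1,...,n} whenever {i_2,...,i_m} ∩ {1,...,k} ≠ ∅. Let U be the sub-tensor of T on indices {1,...,k} and V the sub-tensor on {k+1,...,n}. If U u^{m-1} = 0 has a nonzero solution u ∈ C^k, then T x^{m-1} = 0 has a nonzero solution x ∈ C^n (namely x = (u, 0)); and if T x^{m-1} = 0 has a nonzero solution x = (u, v) with v ≠ 0, then V v^{m-1} = 0. -/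
lemma split_sum_lo {k l K : ℕ} (F : (Fin K → Fin (k + l)) → ℂ)
    (h0 : ∀ f : Fin K → Fin (k + l), (∃ j, k ≤ (f j : ℕ)) → F f = 0) :
    ∑ f : Fin K → Fin (k + l), F f
      = ∑ g : Fin K → Fin k, F (fun j => Fin.castAdd l (g j)) := by
  have hinj : Function.Injective
      (fun g : Fin K → Fin k => (fun j => Fin.castAdd l (g j))) := by
    intro a b hab
    funext j
    have := congrFun hab j
    exact Fin.castAdd_injective _ _ this
  have himg : ∑ f ∈ Finset.univ.image (fun g : Fin K → Fin k =>
      (fun j => Fin.castAdd l (g j))), F f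
      = ∑ g : Fin K → Fin k, F (fun j => Fin.castAdd l (g j)) :=
    Finset.sum_image (fun a _ b _ h => hinj h)
  rw [← himg]
  symm
  apply Finset.sum_subset (Finset.subset_univ _)
  intro f _ hf
  apply h0
  by_contra hc
  push_neg at hc
  exact hf (Finset.mem_image.mpr ⟨fun j => ⟨f j, hc j⟩, Finset.mem_univ _,
    funext fun j => Fin.ext rfl⟩)

lemma split_sum_hi {k l K : ℕ} (F : (Fin K → Fin (k + l)) → ℂ)
    (h0 : ∀ f : Fin K → Fin (k + l), (∃ j, (f j : ℕ) < k) → F f = 0) :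
    ∑ f : Fin K → Fin (k + l), F f
      = ∑ g : Fin K → Fin l, F (fun j => Fin.natAdd k (g j)) := by
  have hinj : Function.Injective
      (fun g : Fin K → Fin l => (fun j => Fin.natAdd k (g j))) := by
    intro a b hab
    funext j
    have := congrFun hab j
    have h2 : ((Fin.natAdd k (a j) : Fin (k+l)) : ℕ) = ((Fin.natAdd k (b j) : Fin (k+l)) : ℕ) :=
      congrArg Fin.val this
    simp [Fin.natAdd] at h2
    exact Fin.ext h2
  have himg : ∑ f ∈ Finset.univ.image (fun g : Fin K → Fin l =>
      (fun j => Fin.natAdd k (g j))), F f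
      = ∑ g : Fin K → Fin l, F (fun j => Fin.natAdd k (g j)) :=
    Finset.sum_image (fun a _ b _ h => hinj h)
  rw [← himg]
  symm
  apply Finset.sum_subset (Finset.subset_univ _)
  intro f _ hf
  apply h0
  by_contra hc
  push_neg at hc
  refine hf (Finset.mem_image.mpr ⟨fun j => ⟨(f j : ℕ) - k, ?_⟩, Finset.mem_univ _,
    funext fun j => Fin.ext ?_⟩)
  · have h1 := (f j).isLt
    have h2 := hc j
    omega
  · have := hc j
    simp [Fin.natAdd]
    omega

/-- Block structure.  Let T be a tensor of order m = K + 1 and dimension n = k + l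
(k, l ≥ 1), whose rows indexed by the last l indices vanish whenever some rest index
lies in the first block.  Let U and V be the sub-tensors on the first k and last l
indices.  Then: a nonzero solution u of U u^{m-1} = 0 yields the nonzero solution
x = (u, 0) of T x^{m-1} = 0; and if x = (u, v) is a nonzero solution of
T x^{m-1} = 0 with v ≠ 0, then V v^{m-1} = 0. -/
theorem stmt16 (k l K : ℕ) (hk : 1 ≤ k) (hl : 1 ≤ l) (hK : 1 ≤ K)
    (t : Fin (k + l) → (Fin K → Fin (k + l)) → ℂ)
    (hblock : ∀ (i : Fin (k + l)), k ≤ (i : ℕ) →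
      ∀ f : Fin K → Fin (k + l), (∃ j, ((f j : ℕ) < k)) → t i f = 0) :
    ((∃ u : Fin k → ℂ, u ≠ 0 ∧
        ∀ i : Fin k, ∑ f : Fin K → Fin k,
          t (Fin.castAdd l i) (fun j => Fin.castAdd l (f j)) * ∏ j, u (f j) = 0) →
      ∃ x : Fin (k + l) → ℂ, x ≠ 0 ∧
        ∀ i, ∑ f : Fin K → Fin (k + l), t i f * ∏ j, x (f j) = 0) ∧
    (∀ x : Fin (k + l) → ℂ, x ≠ 0 →
      (∀ i, ∑ f : Fin K → Fin (k + l), t i f * ∏ j, x (f j) = 0) →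
      (fun i : Fin l => x (Fin.natAdd k i)) ≠ 0 →
      ∀ i : Fin l, ∑ f : Fin K → Fin l,
        t (Fin.natAdd k i) (fun j => Fin.natAdd k (f j)) *
          ∏ j, x (Fin.natAdd k (f j)) = 0) := by
  constructor
  · rintro ⟨u, hu, hsol⟩
    set x : Fin (k + l) → ℂ := fun i => if h : (i : ℕ) < k then u ⟨i, h⟩ else 0 with hx
    have hxc : ∀ a : Fin k, x (Fin.castAdd l a) = u a := by
      intro a
      simp [hx, a.isLt, Fin.castAdd]
    refine ⟨x, ?_, ?_⟩
    · intro h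
      apply hu
      funext a
      have := congrFun h (Fin.castAdd l a)
      simpa [hxc a] using this
    · intro i
      rw [split_sum_lo]
      · by_cases hik : (i : ℕ) < k
        · have := hsol ⟨i, hik⟩
          simp only [hxc]
          convert this using 2
          rfl
        · apply Finset.sum_eq_zero
          intro g _
          have : t i (fun j => Fin.castAdd l (g j)) = 0 := by
            apply hblock i (by omega)
            exact ⟨⟨0, hK⟩, (g _).isLt⟩
          simp [this]
      · intro f ⟨j, hj⟩
        have : x (f j) = 0 := by simp [hx]; omega
        rw [Finset.prod_eq_zero (Finset.mem_univ j) this, mul_zero]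
  · intro x hx hsol hv i
    have := hsol (Fin.natAdd k i)
    rw [split_sum_hi] at this
    · exact this
    · intro f hf
      rw [hblock _ (by simp [Fin.natAdd]) f hf, zero_mul]
end

section
/- Let A = (a_{pq}) be an n×n matrix of commuting indeterminates, m ≥ 2, fix i ∈ {1,...,n}, and let ĝ_i = Σ_{i_2,...,i_m=1}^n t_{i i_2...i_m} ∂/∂a_{i i_2} ⋯ ∂/∂a_{i i_m} be the associated differential operator. Then for every k ≥ 0, (ĝ_i)^k applied to Tr(A^{(m-1)k}) and evaluated at A = 0 equals ((m-1)k)! · (t_{i i ... i})^k. -/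
open MvPolynomial

/-- The trace polynomial `Tr(A^N) = ∑_{c} ∏_s a_{c s, c (s+1)}` in the commuting
indeterminates `a_{pq}`, the sum over cyclic index sequences `c : Fin N → Fin n`. -/
noncomputable def tracePow (n N : ℕ) : MvPolynomial (Fin n × Fin n) ℂ :=
  ∑ c : Fin N → Fin n, ∏ s : Fin N, X (c s, c (finRotate N s))

/-- The differential operator `ĝ_i = ∑_{i_2,…,i_m} t_{i i_2 … i_m}
∂/∂a_{i i_2} ⋯ ∂/∂a_{i i_m}` (order m = K + 1), acting on polynomials in the a_{pq}. -/
noncomputable def gOp (n K : ℕ) (t : Fin n → (Fin K → Fin n) → ℂ) (i : Fin n)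
    (P : MvPolynomial (Fin n × Fin n) ℂ) : MvPolynomial (Fin n × Fin n) ℂ :=
  ∑ f : Fin K → Fin n,
    C (t i f) * (List.finRange K).foldl (fun Q j => pderiv (i, f j) Q) P

namespace Stmt18Aux

variable {n K : ℕ}

/-- Composition of partial derivatives along a list of variables. -/
noncomputable def foldD (l : List (Fin n × Fin n)) (P : MvPolynomial (Fin n × Fin n) ℂ) :
    MvPolynomial (Fin n × Fin n) ℂ :=
  l.foldl (fun Q w => pderiv w Q) P

lemma foldD_nil (P : MvPolynomial (Fin n × Fin n) ℂ) : foldD [] P = P := rfl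

lemma foldD_cons (w : Fin n × Fin n) (l : List (Fin n × Fin n))
    (P : MvPolynomial (Fin n × Fin n) ℂ) : foldD (w :: l) P = foldD l (pderiv w P) := rfl

lemma foldD_zero (l : List (Fin n × Fin n)) : foldD l (0 : MvPolynomial (Fin n × Fin n) ℂ) = 0 := by
  induction l with
  | nil => rfl
  | cons w l ih => rw [foldD_cons, map_zero, ih]

lemma foldD_add (l : List (Fin n × Fin n)) (P Q : MvPolynomial (Fin n × Fin n) ℂ) :
    foldD l (P + Q) = foldD l P + foldD l Q := by
  induction l generalizing P Q with
  | nil => rfl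
  | cons w l ih => rw [foldD_cons, map_add, ih, foldD_cons, foldD_cons]

lemma foldD_C_mul (l : List (Fin n × Fin n)) (a : ℂ) (P : MvPolynomial (Fin n × Fin n) ℂ) :
    foldD l (C a * P) = C a * foldD l P := by
  induction l generalizing P with
  | nil => rfl
  | cons w l ih => rw [foldD_cons, pderiv_C_mul, ih, foldD_cons]

lemma foldD_mul_X (l : List (Fin n × Fin n)) (v0 : Fin n × Fin n)
    (h : ∀ w ∈ l, w ≠ v0) (P : MvPolynomial (Fin n × Fin n) ℂ) :
    foldD l (P * X v0) = foldD l P * X v0 := by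
  induction l generalizing P with
  | nil => rfl
  | cons w l ih =>
    have hw : w ≠ v0 := h w List.mem_cons_self
    rw [foldD_cons, pderiv_mul, pderiv_X_of_ne (Ne.symm hw), mul_zero, add_zero,
      ih (fun x hx => h x (List.mem_cons_of_mem w hx)), foldD_cons]

lemma nat_desc (M len : ℕ) : M * (M - 1).descFactorial len = M.descFactorial (len + 1) := by
  cases M with
  | zero => simp [Nat.descFactorial_succ]
  | succ m =>
    simp only [Nat.add_sub_cancel]
    exact (Nat.succ_descFactorial_succ m len).symm

lemma foldD_X_pow (l : List (Fin n × Fin n)) (v0 : Fin n × Fin n) (M : ℕ) :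
    foldD l (X v0 ^ M) =
      if ∀ w ∈ l, w = v0 then
        C ((M.descFactorial l.length : ℕ) : ℂ) * X v0 ^ (M - l.length) else 0 := by
  induction l generalizing M with
  | nil => simp [foldD_nil]
  | cons w l ih =>
    by_cases hw : w = v0
    · subst hw
      have hd : pderiv w ((X w : MvPolynomial (Fin n × Fin n) ℂ) ^ M)
          = C ((M : ℕ) : ℂ) * X w ^ (M - 1) := by
        rw [pderiv_pow, pderiv_X_self, mul_one]
        simp
      rw [foldD_cons, hd, foldD_C_mul, ih]
      have hcond : (∀ x ∈ w :: l, x = w) ↔ (∀ x ∈ l, x = w) := by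
        simp
      by_cases hc : ∀ x ∈ l, x = w
      · rw [if_pos hc, if_pos (hcond.mpr hc), ← mul_assoc, ← C_mul, List.length_cons]
        have h1 : (M : ℂ) * (((M - 1).descFactorial l.length : ℕ) : ℂ)
            = ((M.descFactorial (l.length + 1) : ℕ) : ℂ) := by
          exact_mod_cast congrArg (Nat.cast : ℕ → ℂ) (nat_desc M l.length)
        rw [h1]
        congr 2
        omega
      · rw [if_neg hc, if_neg (fun h => hc (hcond.mp h)), mul_zero]
    · rw [foldD_cons, pderiv_pow, pderiv_X_of_ne (fun h => hw h.symm), mul_zero, foldD_zero]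
      rw [if_neg]
      intro h
      exact hw (h w List.mem_cons_self)

variable (t : Fin n → (Fin K → Fin n) → ℂ) (i : Fin n)

lemma gOp_eq (P : MvPolynomial (Fin n × Fin n) ℂ) :
    gOp n K t i P = ∑ f : Fin K → Fin n,
      C (t i f) * foldD ((List.finRange K).map fun j => (i, f j)) P := by
  unfold gOp foldD
  simp [List.foldl_map]

lemma gOp_add (P Q : MvPolynomial (Fin n × Fin n) ℂ) :
    gOp n K t i (P + Q) = gOp n K t i P + gOp n K t i Q := by
  rw [gOp_eq, gOp_eq, gOp_eq, ← Finset.sum_add_distrib]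
  refine Finset.sum_congr rfl fun f _ => ?_
  rw [foldD_add, mul_add]

lemma gOp_C_mul (a : ℂ) (P : MvPolynomial (Fin n × Fin n) ℂ) :
    gOp n K t i (C a * P) = C a * gOp n K t i P := by
  rw [gOp_eq, gOp_eq, Finset.mul_sum]
  refine Finset.sum_congr rfl fun f _ => ?_
  rw [foldD_C_mul]
  ring

lemma gOp_mul_X (v0 : Fin n × Fin n) (hv : v0.1 ≠ i) (P : MvPolynomial (Fin n × Fin n) ℂ) :
    gOp n K t i (P * X v0) = gOp n K t i P * X v0 := by
  rw [gOp_eq, gOp_eq, Finset.sum_mul]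
  refine Finset.sum_congr rfl fun f _ => ?_
  rw [foldD_mul_X, mul_assoc]
  intro w hw
  simp only [List.mem_map] at hw
  obtain ⟨j, _, rfl⟩ := hw
  intro h
  exact hv (by rw [← h])

lemma gOp_iter_C_mul (k : ℕ) (a : ℂ) (P : MvPolynomial (Fin n × Fin n) ℂ) :
    (gOp n K t i)^[k] (C a * P) = C a * (gOp n K t i)^[k] P := by
  induction k generalizing P with
  | zero => rfl
  | succ k ih => rw [Function.iterate_succ_apply, Function.iterate_succ_apply, gOp_C_mul, ih]

lemma gOp_iter_mul_X (k : ℕ) (v0 : Fin n × Fin n) (hv : v0.1 ≠ i)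
    (P : MvPolynomial (Fin n × Fin n) ℂ) :
    (gOp n K t i)^[k] (P * X v0) = (gOp n K t i)^[k] P * X v0 := by
  induction k generalizing P with
  | zero => rfl
  | succ k ih =>
    rw [Function.iterate_succ_apply, Function.iterate_succ_apply, gOp_mul_X t i v0 hv, ih]

lemma gOp_iter_add (k : ℕ) (P Q : MvPolynomial (Fin n × Fin n) ℂ) :
    (gOp n K t i)^[k] (P + Q) = (gOp n K t i)^[k] P + (gOp n K t i)^[k] Q := by
  induction k generalizing P Q with
  | zero => rfl
  | succ k ih => rw [Function.iterate_succ_apply, Function.iterate_succ_apply,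
      Function.iterate_succ_apply, gOp_add, ih]

lemma gOp_sum {α : Type*} (s : Finset α) (P : α → MvPolynomial (Fin n × Fin n) ℂ) :
    gOp n K t i (∑ x ∈ s, P x) = ∑ x ∈ s, gOp n K t i (P x) := by
  classical
  induction s using Finset.induction_on with
  | empty =>
    simp only [Finset.sum_empty]
    rw [gOp_eq]
    simp [foldD_zero]
  | @insert a s hx ih =>
    rw [Finset.sum_insert hx, gOp_add, ih, Finset.sum_insert hx]

lemma gOp_iter_sum {α : Type*} (k : ℕ) (s : Finset α)
    (P : α → MvPolynomial (Fin n × Fin n) ℂ) :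
    (gOp n K t i)^[k] (∑ x ∈ s, P x) = ∑ x ∈ s, (gOp n K t i)^[k] (P x) := by
  induction k generalizing P with
  | zero => rfl
  | succ k ih =>
    rw [Function.iterate_succ_apply, gOp_sum, ih]
    exact Finset.sum_congr rfl fun x _ => (Function.iterate_succ_apply _ _ _).symm

lemma gOp_X_pow (M : ℕ) :
    gOp n K t i ((X (i, i) : MvPolynomial (Fin n × Fin n) ℂ) ^ M) =
      C (t i fun _ => i) * C ((M.descFactorial K : ℕ) : ℂ) * X (i, i) ^ (M - K) := by
  classical
  rw [gOp_eq]
  have hlen : ∀ f : Fin K → Fin n, ((List.finRange K).map fun j => (i, f j)).length = K := by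
    intro f; simp
  have hcond : ∀ f : Fin K → Fin n,
      (∀ w ∈ (List.finRange K).map fun j => (i, f j), w = (i, i)) ↔ f = fun _ => i := by
    intro f
    constructor
    · intro h
      funext j
      have := h (i, f j) (by simp)
      exact congrArg Prod.snd this
    · intro h w hw
      simp only [List.mem_map] at hw
      obtain ⟨j, _, rfl⟩ := hw
      rw [h]
  have : ∀ f : Fin K → Fin n,
      C (t i f) * foldD ((List.finRange K).map fun j => (i, f j))
        ((X (i, i) : MvPolynomial (Fin n × Fin n) ℂ) ^ M) =
      if f = (fun _ => i) then
        C (t i f) * (C ((M.descFactorial K : ℕ) : ℂ) * X (i, i) ^ (M - K)) else 0 := by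
    intro f
    rw [foldD_X_pow, hlen f]
    by_cases hf : f = fun _ => i
    · rw [if_pos ((hcond f).mpr hf), if_pos hf]
    · rw [if_neg (fun h => hf ((hcond f).mp h)), if_neg hf, mul_zero]
  rw [Finset.sum_congr rfl (fun f _ => this f), Finset.sum_ite_eq' Finset.univ (fun _ => i)]
  simp [mul_assoc]

lemma eval0_iter_X_pow (k : ℕ) (hK : 1 ≤ K) :
    MvPolynomial.eval (fun _ => (0 : ℂ))
        ((gOp n K t i)^[k] ((X (i, i) : MvPolynomial (Fin n × Fin n) ℂ) ^ (K * k))) =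
      ((K * k).factorial : ℂ) * (t i fun _ => i) ^ k := by
  induction k with
  | zero => simp
  | succ k ih =>
    have hM : K * (k + 1) = K * k + K := by ring
    rw [Function.iterate_succ_apply, hM, gOp_X_pow, Nat.add_sub_cancel,
      mul_assoc, gOp_iter_C_mul, gOp_iter_C_mul, map_mul, map_mul, eval_C, eval_C, ih]
    have hfac : (K * k + K).descFactorial K * (K * k).factorial = (K * k + K).factorial := by
      have := Nat.factorial_mul_descFactorial (n := K * k + K) (k := K) (Nat.le_add_left K (K * k))
      rw [Nat.add_sub_cancel] at this
      rw [mul_comm, this]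
    push_cast [← hfac]
    ring

lemma eval0_iter_prod_zero (N k : ℕ) (c : Fin N → Fin n) (s0 : Fin N) (hc : c s0 ≠ i) :
    MvPolynomial.eval (fun _ => (0 : ℂ))
        ((gOp n K t i)^[k] (∏ s : Fin N, (X (c s, c (finRotate N s)) :
          MvPolynomial (Fin n × Fin n) ℂ))) = 0 := by
  classical
  have hsplit : (∏ s : Fin N, (X (c s, c (finRotate N s)) : MvPolynomial (Fin n × Fin n) ℂ)) =
      (∏ s ∈ Finset.univ.erase s0, (X (c s, c (finRotate N s)) :
        MvPolynomial (Fin n × Fin n) ℂ)) * X (c s0, c (finRotate N s0)) := by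
    exact (Finset.prod_erase_mul Finset.univ _ (Finset.mem_univ s0)).symm
  rw [hsplit, gOp_iter_mul_X t i k _ hc, map_mul, eval_X]
  simp

end Stmt18Aux

/-- For every k ≥ 0, `(ĝ_i)^k Tr(A^{(m-1)k})` evaluated at A = 0 equals
`((m-1)k)! · (t_{i i … i})^k`. -/
theorem stmt18 (n K : ℕ) (hK : 1 ≤ K) (hn : 0 < n)
    (t : Fin n → (Fin K → Fin n) → ℂ) (i : Fin n) :
    ∀ k : ℕ,
      MvPolynomial.eval (fun _ => (0 : ℂ))
          ((gOp n K t i)^[k] (tracePow n (K * k))) =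
        ((K * k).factorial : ℂ) * (t i (fun _ => i)) ^ k := by
  classical
  intro k
  set N := K * k with hN
  have hconst : (∏ s : Fin N, (X ((fun _ => i) s, (fun _ => i) (finRotate N s)) :
      MvPolynomial (Fin n × Fin n) ℂ)) = X (i, i) ^ N := by
    simp [Finset.prod_const]
  have hsplit : tracePow n N =
      (X (i, i) : MvPolynomial (Fin n × Fin n) ℂ) ^ N +
        ∑ c ∈ Finset.univ.erase (fun _ => i),
          ∏ s : Fin N, (X (c s, c (finRotate N s)) : MvPolynomial (Fin n × Fin n) ℂ) := by
    rw [tracePow, ← hconst]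
    exact (Finset.add_sum_erase Finset.univ
      (fun c : Fin N → Fin n => ∏ s : Fin N, (X (c s, c (finRotate N s)) :
        MvPolynomial (Fin n × Fin n) ℂ)) (Finset.mem_univ _)).symm
  rw [hsplit, Stmt18Aux.gOp_iter_add, Stmt18Aux.gOp_iter_sum, map_add, map_sum]
  have hz : ∀ c ∈ Finset.univ.erase (fun _ : Fin N => i),
      MvPolynomial.eval (fun _ => (0 : ℂ))
        ((gOp n K t i)^[k] (∏ s : Fin N, (X (c s, c (finRotate N s)) :
          MvPolynomial (Fin n × Fin n) ℂ))) = 0 := by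
    intro c hc
    have hne : c ≠ fun _ => i := Finset.ne_of_mem_erase hc
    obtain ⟨s0, hs0⟩ := Function.ne_iff.mp hne
    exact Stmt18Aux.eval0_iter_prod_zero t i N k c s0 hs0
  rw [Finset.sum_congr rfl hz, Finset.sum_const, smul_zero, add_zero]
  exact Stmt18Aux.eval0_iter_X_pow t i k hK
end
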